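/- For finite discrete random variables X and Y with joint distribution p(x,y) having full-support marginals, the CLUB quantity I_CLUB(X;Y) := E_{p(x,y)}[log p(y|x)] − E_{p(x)}E_{p(y)}[log p(y|x)] satisfies I(X;Y) ≤ I_CLUB(X;Y); more precisely, I_CLUB(X;Y) − I(X;Y) equals the Kullback–Leibler divergence KL(p(x)·p(y) ‖ p(x,y)), and equality I = I_CLUB holds if and only if X and Y are independent. -/
import Mathlib

/-- Gibbs-type pointwise bound: `b - a ≤ b * log (b / a)` for positive `a, b`. -/
lemma club_key (a b : ℝ) (ha : 0 < a) (hb : 0 < b) :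
    b - a ≤ b * Real.log (b / a) := by
  have h := Real.log_le_sub_one_of_pos (show (0:ℝ) < a / b by positivity)
  have hlog : Real.log (b / a) = - Real.log (a / b) := by
    rw [← Real.log_inv]; congr 1; field_simp
  rw [hlog]
  have h2 : b * Real.log (a / b) ≤ b * (a / b - 1) := by
    exact mul_le_mul_of_nonneg_left h hb.le
  have h3 : b * (a / b - 1) = a - b := by field_simp
  nlinarith

lemma club_key_strict (a b : ℝ) (ha : 0 < a) (hb : 0 < b) (hne : a ≠ b) :
    b - a < b * Real.log (b / a) := by
  have hab : a / b ≠ 1 := by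
    intro h
    exact hne (by field_simp at h; linarith)
  have h := Real.log_lt_sub_one_of_pos (show (0:ℝ) < a / b by positivity) hab
  have hlog : Real.log (b / a) = - Real.log (a / b) := by
    rw [← Real.log_inv]; congr 1; field_simp
  rw [hlog]
  have h2 : b * Real.log (a / b) < b * (a / b - 1) := by
    exact mul_lt_mul_of_pos_left h hb
  have h3 : b * (a / b - 1) = a - b := by field_simp
  nlinarith

theorem club_upper_bound_of_mutual_information
    {X Y : Type*} [Fintype X] [Fintype Y]
    (p : X × Y → ℝ)
    (hp_pos : ∀ z, 0 < p z)
    (hp_sum : ∑ z : X × Y, p z = 1)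
    (px : X → ℝ) (hpx : ∀ x, px x = ∑ y : Y, p (x, y))
    (py : Y → ℝ) (hpy : ∀ y, py y = ∑ x : X, p (x, y))
    (pcond : X → Y → ℝ) (hpcond : ∀ x y, pcond x y = p (x, y) / px x)
    (I : ℝ) (hI : I = ∑ z : X × Y, p z * Real.log (p z / (px z.1 * py z.2)))
    (ICLUB : ℝ)
    (hICLUB : ICLUB = (∑ z : X × Y, p z * Real.log (pcond z.1 z.2)) -
        ∑ z : X × Y, px z.1 * py z.2 * Real.log (pcond z.1 z.2))
    (KL : ℝ)
    (hKL : KL = ∑ z : X × Y, px z.1 * py z.2 * Real.log (px z.1 * py z.2 / p z)) :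
    I ≤ ICLUB ∧ ICLUB - I = KL ∧
      (I = ICLUB ↔ ∀ x y, p (x, y) = px x * py y) := by
  classical
  have hpx_pos : ∀ x, 0 < px x := by
    intro x
    rcases isEmpty_or_nonempty Y with hY | hY
    · exfalso
      have : ∑ z : X × Y, p z = 0 := Finset.sum_eq_zero (fun z _ => (hY.false z.2).elim)
      rw [this] at hp_sum; norm_num at hp_sum
    · rw [hpx]
      exact Finset.sum_pos (fun y _ => hp_pos _) Finset.univ_nonempty
  have hpy_pos : ∀ y, 0 < py y := by
    intro y
    rcases isEmpty_or_nonempty X with hX | hX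
    · exfalso
      have : ∑ z : X × Y, p z = 0 := Finset.sum_eq_zero (fun z _ => (hX.false z.1).elim)
      rw [this] at hp_sum; norm_num at hp_sum
    · rw [hpy]
      exact Finset.sum_pos (fun x _ => hp_pos _) Finset.univ_nonempty
  have hsum_px : ∑ x : X, px x = 1 := by
    simp_rw [hpx]; rw [← Fintype.sum_prod_type]; exact hp_sum
  have hsum_py : ∑ y : Y, py y = 1 := by
    simp_rw [hpy]; rw [← Fintype.sum_prod_type_right]; exact hp_sum
  have hsum_q : ∑ z : X × Y, px z.1 * py z.2 = 1 := by
    rw [Fintype.sum_prod_type]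
    simp_rw [← Finset.mul_sum, hsum_py, mul_one]
    exact hsum_px
  -- The main algebraic identity: ICLUB - I = KL
  have hdiff : ICLUB - I = KL := by
    have key : ∀ z : X × Y,
        p z * Real.log (pcond z.1 z.2) - px z.1 * py z.2 * Real.log (pcond z.1 z.2)
          - p z * Real.log (p z / (px z.1 * py z.2))
          - px z.1 * py z.2 * Real.log (px z.1 * py z.2 / p z)
        = (p z - px z.1 * py z.2) * Real.log (py z.2) := by
      intro z
      have h1 : (0:ℝ) < p z := hp_pos z
      have h2 : (0:ℝ) < px z.1 := hpx_pos z.1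
      have h3 : (0:ℝ) < py z.2 := hpy_pos z.2
      rw [hpcond, Real.log_div h1.ne' h2.ne',
        Real.log_div h1.ne' (mul_pos (hpx_pos z.1) (hpy_pos z.2)).ne',
        Real.log_div (mul_pos (hpx_pos z.1) (hpy_pos z.2)).ne' h1.ne',
        Real.log_mul h2.ne' h3.ne']
      ring
    have hzero : ∑ z : X × Y, (p z - px z.1 * py z.2) * Real.log (py z.2) = 0 := by
      rw [Fintype.sum_prod_type_right]
      apply Finset.sum_eq_zero
      intro y _
      dsimp only
      rw [← Finset.sum_mul]
      have : ∑ x : X, (p (x, y) - px x * py y) = 0 := by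
        rw [Finset.sum_sub_distrib, ← Finset.sum_mul, hsum_px, ← hpy]; ring
      rw [this, zero_mul]
    have expand : ICLUB - I - KL
        = ∑ z : X × Y, (p z - px z.1 * py z.2) * Real.log (py z.2) := by
      rw [hI, hICLUB, hKL, ← Finset.sum_congr rfl (fun z _ => key z)]
      rw [Finset.sum_sub_distrib, Finset.sum_sub_distrib, Finset.sum_sub_distrib]
    rw [hzero] at expand
    linarith
  -- KL ≥ 0
  have hKL_nonneg : 0 ≤ KL := by
    rw [hKL]
    have h1 : ∑ z : X × Y, (px z.1 * py z.2 - p z)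
        ≤ ∑ z : X × Y, px z.1 * py z.2 * Real.log (px z.1 * py z.2 / p z) := by
      apply Finset.sum_le_sum
      intro z _
      exact club_key (p z) (px z.1 * py z.2) (hp_pos z) (mul_pos (hpx_pos z.1) (hpy_pos z.2))
    have h2 : ∑ z : X × Y, (px z.1 * py z.2 - p z) = 0 := by
      rw [Finset.sum_sub_distrib, hsum_q, hp_sum]; ring
    linarith
  refine ⟨by linarith, hdiff, ?_⟩
  constructor
  · intro hIeq
    have hKL0 : KL = 0 := by linarith
    intro x y
    by_contra hne
    set z : X × Y := (x, y) with hz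
    have hnonneg : ∀ w ∈ (Finset.univ : Finset (X × Y)),
        0 ≤ px w.1 * py w.2 * Real.log (px w.1 * py w.2 / p w) - (px w.1 * py w.2 - p w) := by
      intro w _
      have := club_key (p w) (px w.1 * py w.2) (hp_pos w) (mul_pos (hpx_pos w.1) (hpy_pos w.2))
      linarith
    have hsum0 : ∑ w : X × Y,
        (px w.1 * py w.2 * Real.log (px w.1 * py w.2 / p w) - (px w.1 * py w.2 - p w)) = 0 := by
      rw [Finset.sum_sub_distrib, Finset.sum_sub_distrib, hsum_q, hp_sum, ← hKL]
      rw [hKL0]; ring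
    have hterm : px z.1 * py z.2 * Real.log (px z.1 * py z.2 / p z)
        - (px z.1 * py z.2 - p z) = 0 := by
      have := (Finset.sum_eq_zero_iff_of_nonneg hnonneg).mp hsum0 z (Finset.mem_univ z)
      exact this
    have hstrict := club_key_strict (p z) (px z.1 * py z.2) (hp_pos z) (mul_pos (hpx_pos z.1) (hpy_pos z.2))
      (by simpa [hz] using hne)
    linarith
  · intro hind
    have : KL = 0 := by
      rw [hKL]
      apply Finset.sum_eq_zero
      intro z _
      rw [← hind z.1 z.2, div_self (hp_pos z).ne', Real.log_one, mul_zero]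
    linarith
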